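/- The CoHa-module of the one-loop quiver with framing n, namely the quotient of Q[φ_0, φ_1, ...] (identified with the shuffle algebra of the loop quiver) by the ideal Σ_{p≥0,q≥1} H_p * (e_q^n ∪ H_q), is isomorphic to the polynomial ring Q[φ_0, φ_1, ..., φ_{n−1}]; equivalently the ideal is generated by φ_n, φ_{n+1}, φ_{n+2}, .... -/

import Mathlib

open MvPolynomial

attribute [local instance] Classical.propDecidable

/-- `(d,e)`-shuffles. -/
def IsShuffle {d e : ℕ} (σ : Equiv.Perm (Fin (d + e))) : Prop :=
  StrictMono (fun i : Fin d => σ (Fin.castAdd e i)) ∧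
    StrictMono (fun j : Fin e => σ (Fin.natAdd d j))

/-- The CoHa product of the one-loop quiver:
`(f*g)(x_1,…,x_{d+e}) = Σ_σ f(x_{σ(1)},…,x_{σ(d)}) g(x_{σ(d+1)},…,x_{σ(d+e)})`,
the sum over `(d,e)`-shuffles. -/
noncomputable def loopMul {d e : ℕ} (f : MvPolynomial (Fin d) ℚ)
    (g : MvPolynomial (Fin e) ℚ) : MvPolynomial (Fin (d + e)) ℚ :=
  ∑ σ ∈ Finset.univ.filter (fun σ : Equiv.Perm (Fin (d + e)) => IsShuffle σ),
    rename (fun i : Fin d => σ (Fin.castAdd e i)) f *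
      rename (fun j : Fin e => σ (Fin.natAdd d j)) g

/-- `φ_i(x) = x^i ∈ ℚ[x]`. -/
noncomputable def phiF (i : ℕ) : MvPolynomial (Fin 1) ℚ := X 0 ^ i

/-- Iterated product `φ_{k_1} * ⋯ * φ_{k_d}`. -/
noncomputable def iterLoop : (d : ℕ) → (Fin d → ℕ) → MvPolynomial (Fin d) ℚ
  | 0, _ => 1
  | d + 1, k => loopMul (iterLoop d (fun i => k i.castSucc)) (phiF (k (Fin.last d)))

/-- The degree-`d` component of the kernel ideal
`Σ_{p≥0,q≥1} H_p * (e_q^n ∪ H_q)` for the one-loop quiver with framing `n`: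
spanned by products `f * ((x_1⋯x_q)^n · g)` with `f` symmetric in `p`
variables, `g` symmetric in `q ≥ 1` variables, `p + q = d`. -/
noncomputable def loopFramingIdeal (n d : ℕ) : Submodule ℚ (MvPolynomial (Fin d) ℚ) :=
  Submodule.span ℚ {z : MvPolynomial (Fin d) ℚ | ∃ (p q : ℕ) (h : p + q = d)
    (f : MvPolynomial (Fin p) ℚ) (g : MvPolynomial (Fin q) ℚ),
    0 < q ∧ f.IsSymmetric ∧ g.IsSymmetric ∧
    cast (congrArg (fun m => MvPolynomial (Fin m) ℚ) h)
      (loopMul f ((∏ j : Fin q, X j) ^ n * g)) = z}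

noncomputable def msum (d : ℕ) (k : Fin d → ℕ) : MvPolynomial (Fin d) ℚ :=
  ∑ σ : Equiv.Perm (Fin d), ∏ i, X i ^ k (σ i)

lemma msum_comp_perm {d : ℕ} (k : Fin d → ℕ) (π : Equiv.Perm (Fin d)) :
    msum d (fun i => k (π i)) = msum d k :=
  Fintype.sum_bijective (fun σ => π * σ) (Group.mulLeft_bijective π) _ _
    (fun σ => by simp [Equiv.Perm.mul_apply])

lemma msum_symmetric {d : ℕ} (k : Fin d → ℕ) : (msum d k).IsSymmetric := by
  intro e
  unfold msum
  rw [map_sum]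
  have h1 : ∀ σ : Equiv.Perm (Fin d),
      rename (⇑e) (∏ i, (X i : MvPolynomial (Fin d) ℚ) ^ k (σ i)) =
        ∏ i, (X i : MvPolynomial (Fin d) ℚ) ^ k ((σ * e.symm) i) := by
    intro σ
    rw [map_prod]
    refine Fintype.prod_equiv e _ _ (fun i => ?_)
    simp [Equiv.Perm.mul_apply]
  rw [Finset.sum_congr rfl (fun σ _ => h1 σ)]
  exact Fintype.sum_bijective (fun σ => σ * e.symm) (Group.mulRight_bijective e.symm) _ _
    (fun σ => rfl)

/-- function to finsupp -/
noncomputable def fs {d : ℕ} (a : Fin d → ℕ) : Fin d →₀ ℕ :=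
  Finsupp.equivFunOnFinite.symm a

@[simp] lemma fs_apply {d : ℕ} (a : Fin d → ℕ) (i : Fin d) : fs a i = a i := rfl

lemma fs_injective {d : ℕ} : Function.Injective (fs (d := d)) :=
  Finsupp.equivFunOnFinite.symm.injective

lemma prod_X_pow_eq {d : ℕ} (a : Fin d → ℕ) :
    (∏ i, (X i : MvPolynomial (Fin d) ℚ) ^ a i) = monomial (fs a) 1 := by
  rw [← MvPolynomial.prod_X_pow_eq_monomial]
  rw [← Finset.prod_subset (Finset.subset_univ (fs a).support)]
  · exact Finset.prod_congr rfl fun i _ => rfl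
  · intro i _ hi
    have : a i = 0 := by simpa using (Finsupp.notMem_support_iff.mp hi)
    simp [this]

lemma coeff_msum {d : ℕ} (k : Fin d → ℕ) (e : Fin d →₀ ℕ) :
    coeff e (msum d k) =
      ((Finset.univ.filter (fun σ : Equiv.Perm (Fin d) => fs (fun i => k (σ i)) = e)).card : ℚ) := by
  unfold msum
  rw [MvPolynomial.coeff_sum]
  have : ∀ σ : Equiv.Perm (Fin d),
      coeff e (∏ i, (X i : MvPolynomial (Fin d) ℚ) ^ k (σ i)) =
        if fs (fun i => k (σ i)) = e then 1 else 0 := by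
    intro σ
    rw [prod_X_pow_eq, coeff_monomial]
  rw [Finset.sum_congr rfl (fun σ _ => this σ)]
  simp [Finset.sum_boole]





section Shuffles

variable {p q : ℕ}

/-- block permutation -/
def blockPerm (t : Equiv.Perm (Fin p) × Equiv.Perm (Fin q)) : Equiv.Perm (Fin (p + q)) :=
  finSumFinEquiv.permCongr (t.1.sumCongr t.2)

@[simp] lemma blockPerm_castAdd (t : Equiv.Perm (Fin p) × Equiv.Perm (Fin q)) (i : Fin p) :
    blockPerm t (Fin.castAdd q i) = Fin.castAdd q (t.1 i) := by
  simp [blockPerm, Equiv.permCongr_apply]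

@[simp] lemma blockPerm_natAdd (t : Equiv.Perm (Fin p) × Equiv.Perm (Fin q)) (j : Fin q) :
    blockPerm t (Fin.natAdd p j) = Fin.natAdd p (t.2 j) := by
  simp [blockPerm, Equiv.permCongr_apply]

lemma castAdd_ne_natAdd (i : Fin p) (j : Fin q) : Fin.castAdd q i ≠ Fin.natAdd p j := by
  intro h
  have h1 : (i : ℕ) = p + j := congrArg Fin.val h
  omega

/-- decomposition map -/
def shuffleComp (t : Equiv.Perm (Fin (p + q)) × (Equiv.Perm (Fin p) × Equiv.Perm (Fin q))) :
    Equiv.Perm (Fin (p + q)) :=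
  t.1 * blockPerm t.2

lemma range_natAdd_part (σ : Equiv.Perm (Fin (p + q))) :
    Set.range (fun j : Fin q => σ (Fin.natAdd p j)) =
      (Set.range (fun i : Fin p => σ (Fin.castAdd q i)))ᶜ := by
  ext x
  simp only [Set.mem_range, Set.mem_compl_iff, not_exists]
  constructor
  · rintro ⟨j, rfl⟩ i h
    exact castAdd_ne_natAdd i j (σ.injective h)
  · intro h
    rcases Fin.addCases (motive := fun y => σ.symm x = y → ∃ j, σ (Fin.natAdd p j) = x)
      (fun i hi => absurd (by rw [← hi]; simp) (h i))
      (fun j hj => ⟨j, by rw [← hj]; simp⟩) (σ.symm x) rfl with ⟨j, hj⟩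
    exact ⟨j, hj⟩

set_option linter.deprecated false in
lemma shuffleComp_injOn :
    ∀ t₁ t₂ : Equiv.Perm (Fin (p + q)) × (Equiv.Perm (Fin p) × Equiv.Perm (Fin q)),
      IsShuffle t₁.1 → IsShuffle t₂.1 → shuffleComp t₁ = shuffleComp t₂ → t₁ = t₂ := by
  rintro ⟨σ₁, s₁, π₁⟩ ⟨σ₂, s₂, π₂⟩ h₁ h₂ h
  have hc : ∀ i : Fin p, σ₁ (Fin.castAdd q (s₁ i)) = σ₂ (Fin.castAdd q (s₂ i)) := by
    intro i
    have := congrArg (fun τ : Equiv.Perm (Fin (p + q)) => τ (Fin.castAdd q i)) h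
    simpa [shuffleComp, Equiv.Perm.mul_apply] using this
  have hn : ∀ j : Fin q, σ₁ (Fin.natAdd p (π₁ j)) = σ₂ (Fin.natAdd p (π₂ j)) := by
    intro j
    have := congrArg (fun τ : Equiv.Perm (Fin (p + q)) => τ (Fin.natAdd p j)) h
    simpa [shuffleComp, Equiv.Perm.mul_apply] using this
  -- equal ranges of the castAdd parts
  have hrange : Set.range (fun i : Fin p => σ₁ (Fin.castAdd q i)) =
      Set.range (fun i : Fin p => σ₂ (Fin.castAdd q i)) := by
    ext x
    simp only [Set.mem_range]
    constructor
    · rintro ⟨i, rfl⟩; exact ⟨s₂ (s₁.symm i), by rw [← hc (s₁.symm i)]; simp⟩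
    · rintro ⟨i, rfl⟩; exact ⟨s₁ (s₂.symm i), by rw [hc (s₂.symm i)]; simp⟩
  have hceq : (fun i : Fin p => σ₁ (Fin.castAdd q i)) =
      (fun i : Fin p => σ₂ (Fin.castAdd q i)) := (h₁.1.range_inj h₂.1).mp hrange
  have hrange' : Set.range (fun j : Fin q => σ₁ (Fin.natAdd p j)) =
      Set.range (fun j : Fin q => σ₂ (Fin.natAdd p j)) := by
    rw [range_natAdd_part, range_natAdd_part, hrange]
  have hneq : (fun j : Fin q => σ₁ (Fin.natAdd p j)) =
      (fun j : Fin q => σ₂ (Fin.natAdd p j)) := (h₁.2.range_inj h₂.2).mp hrange'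
  have hσ : σ₁ = σ₂ := by
    apply Equiv.ext
    intro x
    induction x using Fin.addCases with
    | left i => exact congrFun hceq i
    | right j => exact congrFun hneq j
  subst hσ
  have hs : s₁ = s₂ := by
    apply Equiv.ext; intro i
    exact Fin.castAdd_injective p q (σ₁.injective (hc i))
  have hπ : π₁ = π₂ := by
    apply Equiv.ext; intro j
    have := σ₁.injective (hn j)
    have h2 : ((Fin.natAdd p (π₁ j) : Fin (p + q)) : ℕ) = (Fin.natAdd p (π₂ j) : ℕ) :=
      congrArg Fin.val this
    simp only [Fin.coe_natAdd] at h2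
    exact Fin.ext (by omega)
  rw [hs, hπ]

section Dec

variable (τ : Equiv.Perm (Fin (p + q)))

/-- image of the first block -/
def blockA (τ : Equiv.Perm (Fin (p + q))) : Finset (Fin (p + q)) :=
  Finset.image (fun i : Fin p => τ (Fin.castAdd q i)) Finset.univ

lemma blockA_card : (blockA τ).card = p := by
  rw [blockA, Finset.card_image_of_injective _
    (fun a b h => Fin.castAdd_injective p q (τ.injective h))]
  simp

lemma blockA_compl_card : (blockA τ)ᶜ.card = q := by
  rw [Finset.card_compl, blockA_card]
  simp

lemma mem_blockA (i : Fin p) : τ (Fin.castAdd q i) ∈ blockA τ := by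
  simp [blockA]

lemma mem_blockA_compl (j : Fin q) : τ (Fin.natAdd p j) ∈ (blockA τ)ᶜ := by
  simp only [Finset.mem_compl, blockA, Finset.mem_image, Finset.mem_univ, true_and, not_exists]
  intro i h
  exact castAdd_ne_natAdd i j (τ.injective h)

/-- the shuffle in the decomposition of τ -/
noncomputable def decShuffle : Equiv.Perm (Fin (p + q)) := by
  refine Equiv.ofBijective
    (Fin.addCases (fun i : Fin p => (blockA τ).orderEmbOfFin (blockA_card τ) i)
      (fun j : Fin q => ((blockA τ)ᶜ).orderEmbOfFin (blockA_compl_card τ) j))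
    ((Finite.injective_iff_bijective).mp ?_)
  intro x y h
  induction x using Fin.addCases with
  | left i =>
    induction y using Fin.addCases with
    | left i' =>
      simp only [Fin.addCases_left] at h
      exact congrArg _ (((blockA τ).orderEmbOfFin (blockA_card τ)).injective h)
    | right j' =>
      simp only [Fin.addCases_left, Fin.addCases_right] at h
      have h1 := Finset.orderEmbOfFin_mem (blockA τ) (blockA_card τ) i
      have h2 := Finset.orderEmbOfFin_mem ((blockA τ)ᶜ) (blockA_compl_card τ) j'
      rw [h] at h1
      rw [Finset.mem_compl] at h2
      exact absurd h1 h2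
  | right j =>
    induction y using Fin.addCases with
    | left i' =>
      simp only [Fin.addCases_left, Fin.addCases_right] at h
      have h1 := Finset.orderEmbOfFin_mem (blockA τ) (blockA_card τ) i'
      have h2 := Finset.orderEmbOfFin_mem ((blockA τ)ᶜ) (blockA_compl_card τ) j
      rw [← h] at h1
      rw [Finset.mem_compl] at h2
      exact absurd h1 h2
    | right j' =>
      simp only [Fin.addCases_right] at h
      exact congrArg _ ((((blockA τ)ᶜ).orderEmbOfFin (blockA_compl_card τ)).injective h)

lemma decShuffle_castAdd (i : Fin p) :
    decShuffle τ (Fin.castAdd q i) = (blockA τ).orderEmbOfFin (blockA_card τ) i := by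
  simp [decShuffle, Equiv.ofBijective_apply, Fin.addCases_left]

lemma decShuffle_natAdd (j : Fin q) :
    decShuffle τ (Fin.natAdd p j) = ((blockA τ)ᶜ).orderEmbOfFin (blockA_compl_card τ) j := by
  simp [decShuffle, Equiv.ofBijective_apply, Fin.addCases_right]

lemma decShuffle_isShuffle : IsShuffle (decShuffle τ) := by
  constructor
  · intro a b hab
    simp only [decShuffle_castAdd]
    exact ((blockA τ).orderEmbOfFin (blockA_card τ)).strictMono hab
  · intro a b hab
    simp only [decShuffle_natAdd]
    exact (((blockA τ)ᶜ).orderEmbOfFin (blockA_compl_card τ)).strictMono hab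

/-- the left inner permutation -/
noncomputable def decPermL : Equiv.Perm (Fin p) := by
  refine Equiv.ofBijective
    (fun i => ((blockA τ).orderIsoOfFin (blockA_card τ)).symm ⟨τ (Fin.castAdd q i), mem_blockA τ i⟩)
    ((Finite.injective_iff_bijective).mp ?_)
  intro a b h
  have := congrArg (fun z => (((blockA τ).orderIsoOfFin (blockA_card τ)) z : Fin (p + q))) h
  simp only [OrderIso.apply_symm_apply] at this
  exact Fin.castAdd_injective p q (τ.injective this)

noncomputable def decPermR : Equiv.Perm (Fin q) := by
  refine Equiv.ofBijective
    (fun j => (((blockA τ)ᶜ).orderIsoOfFin (blockA_compl_card τ)).symm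
      ⟨τ (Fin.natAdd p j), mem_blockA_compl τ j⟩)
    ((Finite.injective_iff_bijective).mp ?_)
  intro a b h
  have := congrArg (fun z => ((((blockA τ)ᶜ).orderIsoOfFin (blockA_compl_card τ)) z : Fin (p + q))) h
  simp only [OrderIso.apply_symm_apply] at this
  have h2 : ((Fin.natAdd p a : Fin (p + q)) : ℕ) = (Fin.natAdd p b : ℕ) :=
    congrArg Fin.val (τ.injective this)
  simp only [Fin.coe_natAdd] at h2
  exact Fin.ext (by omega)

/-- Ψ -/
noncomputable def shuffleDec (τ : Equiv.Perm (Fin (p + q))) :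
    Equiv.Perm (Fin (p + q)) × (Equiv.Perm (Fin p) × Equiv.Perm (Fin q)) :=
  (decShuffle τ, decPermL τ, decPermR τ)

lemma shuffleComp_shuffleDec : shuffleComp (shuffleDec τ) = τ := by
  apply Equiv.ext
  intro x
  induction x using Fin.addCases with
  | left i =>
    show (decShuffle τ) (blockPerm (decPermL τ, decPermR τ) (Fin.castAdd q i)) = _
    rw [blockPerm_castAdd, decShuffle_castAdd]
    show (((blockA τ).orderIsoOfFin (blockA_card τ)) (decPermL τ i) : Fin (p+q)) = _
    show (((blockA τ).orderIsoOfFin (blockA_card τ))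
      (((blockA τ).orderIsoOfFin (blockA_card τ)).symm ⟨τ (Fin.castAdd q i), mem_blockA τ i⟩)
        : Fin (p+q)) = _
    rw [OrderIso.apply_symm_apply]
  | right j =>
    show (decShuffle τ) (blockPerm (decPermL τ, decPermR τ) (Fin.natAdd p j)) = _
    rw [blockPerm_natAdd, decShuffle_natAdd]
    show ((((blockA τ)ᶜ).orderIsoOfFin (blockA_compl_card τ)) (decPermR τ j) : Fin (p+q)) = _
    show ((((blockA τ)ᶜ).orderIsoOfFin (blockA_compl_card τ))
      ((((blockA τ)ᶜ).orderIsoOfFin (blockA_compl_card τ)).symm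
        ⟨τ (Fin.natAdd p j), mem_blockA_compl τ j⟩) : Fin (p+q)) = _
    rw [OrderIso.apply_symm_apply]

end Dec

end Shuffles

lemma rename_msum {p D : ℕ} (u : Fin p → Fin D) (k : Fin p → ℕ) :
    rename u (msum p k) = ∑ σ : Equiv.Perm (Fin p), ∏ i, (X (u i) : MvPolynomial (Fin D) ℚ) ^ k (σ i) := by
  unfold msum
  rw [map_sum]
  exact Finset.sum_congr rfl fun σ _ => by rw [map_prod]; exact Finset.prod_congr rfl fun i _ => by simp

lemma sum_perm_prod_pow {p D : ℕ} (u : Fin p → Fin D) (k : Fin p → ℕ) :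
    (∑ σ : Equiv.Perm (Fin p), ∏ i, (X (u i) : MvPolynomial (Fin D) ℚ) ^ k (σ i)) =
      ∑ σ : Equiv.Perm (Fin p), ∏ i, (X (u (σ i)) : MvPolynomial (Fin D) ℚ) ^ k i := by
  refine Fintype.sum_bijective (fun σ : Equiv.Perm (Fin p) => σ⁻¹)
    (Function.Involutive.bijective (fun σ => by simp)) _ _ (fun σ => ?_)
  refine Fintype.prod_equiv σ _ _ (fun x => ?_)
  simp

lemma loopMul_msum_msum (p q : ℕ) (k : Fin p → ℕ) (m : Fin q → ℕ) :
    loopMul (msum p k) (msum q m) = msum (p + q) (Fin.append k m) := by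
  have hR : msum (p + q) (Fin.append k m) =
      ∑ τ : Equiv.Perm (Fin (p + q)),
        (∏ i, (X (τ (Fin.castAdd q i)) : MvPolynomial (Fin (p + q)) ℚ) ^ k i) *
          (∏ j, (X (τ (Fin.natAdd p j)) : MvPolynomial (Fin (p + q)) ℚ) ^ m j) := by
    unfold msum
    refine Fintype.sum_bijective (fun τ : Equiv.Perm (Fin (p + q)) => τ⁻¹)
      (Function.Involutive.bijective (fun σ => by simp)) _ _ (fun τ => ?_)
    have h1 : (∏ x, (X x : MvPolynomial (Fin (p + q)) ℚ) ^ Fin.append k m (τ x)) =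
        ∏ x, (X (τ⁻¹ x) : MvPolynomial (Fin (p + q)) ℚ) ^ Fin.append k m x :=
      Fintype.prod_equiv τ _ _ (fun x => by simp)
    rw [h1, Fin.prod_univ_add]
    congr 1
    · exact Finset.prod_congr rfl fun i _ => by rw [Fin.append_left]
    · exact Finset.prod_congr rfl fun j _ => by rw [Fin.append_right]
  rw [hR]
  unfold loopMul
  have hterm : ∀ sh : Equiv.Perm (Fin (p + q)),
      rename (fun i : Fin p => sh (Fin.castAdd q i)) (msum p k) *
        rename (fun j : Fin q => sh (Fin.natAdd p j)) (msum q m) =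
      ∑ t : Equiv.Perm (Fin p) × Equiv.Perm (Fin q),
        (∏ i, (X (sh (Fin.castAdd q (t.1 i))) : MvPolynomial (Fin (p + q)) ℚ) ^ k i) *
          (∏ j, (X (sh (Fin.natAdd p (t.2 j))) : MvPolynomial (Fin (p + q)) ℚ) ^ m j) := by
    intro sh
    rw [rename_msum, rename_msum, sum_perm_prod_pow, sum_perm_prod_pow, Finset.sum_mul_sum]
    rw [← Finset.sum_product']
    rfl
  rw [Finset.sum_congr rfl fun sh _ => hterm sh]
  rw [← Finset.sum_product']
  refine Finset.sum_nbij' (fun t => shuffleComp (t.1, t.2))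
    (fun τ => ((shuffleDec τ).1, (shuffleDec τ).2)) (fun t _ => Finset.mem_univ _)
    (fun τ _ => ?_) (fun t ht => ?_) (fun τ _ => ?_) (fun t ht => ?_)
  · rw [Finset.mem_product]
    refine ⟨Finset.mem_filter.mpr ⟨Finset.mem_univ _, decShuffle_isShuffle τ⟩, Finset.mem_univ _⟩
  · -- left inverse
    rw [Finset.mem_product, Finset.mem_filter] at ht
    have h1 : IsShuffle (shuffleDec (shuffleComp (t.1, t.2))).1 := decShuffle_isShuffle _
    have := shuffleComp_injOn _ (t.1, t.2) h1 ht.1.2 (shuffleComp_shuffleDec (shuffleComp (t.1, t.2)))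
    rw [Prod.ext_iff] at this
    exact Prod.ext this.1 this.2
  · exact shuffleComp_shuffleDec τ
  · -- terms agree
    refine congrArg₂ _ (Finset.prod_congr rfl fun i _ => ?_) (Finset.prod_congr rfl fun j _ => ?_)
    · have : shuffleComp (t.1, t.2) (Fin.castAdd q i) = t.1 (Fin.castAdd q (t.2.1 i)) := by
        simp [shuffleComp, Equiv.Perm.mul_apply]
      rw [this]
    · have : shuffleComp (t.1, t.2) (Fin.natAdd p j) = t.1 (Fin.natAdd p (t.2.2 j)) := by
        simp [shuffleComp, Equiv.Perm.mul_apply]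
      rw [this]





lemma msum_one (c : Fin 1 → ℕ) : msum 1 c = X 0 ^ c 0 := by
  unfold msum
  have h : ∀ σ : Equiv.Perm (Fin 1),
      (∏ i, (X i : MvPolynomial (Fin 1) ℚ) ^ c (σ i)) = X 0 ^ c 0 := by
    intro σ
    rw [Fin.prod_univ_one, Subsingleton.elim (σ 0) 0]
  rw [Finset.sum_congr rfl (fun σ _ => h σ), Finset.sum_const, Finset.card_univ,
    Fintype.card_perm]
  simp

lemma iterLoop_eq_msum : ∀ (d : ℕ) (k : Fin d → ℕ), iterLoop d k = msum d k := by
  intro d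
  induction d with
  | zero =>
    intro k
    show (1 : MvPolynomial (Fin 0) ℚ) = msum 0 k
    unfold msum
    rw [Finset.sum_congr rfl (fun σ _ => Finset.prod_of_isEmpty _), Finset.sum_const,
      Finset.card_univ, Fintype.card_perm]
    simp
  | succ d ih =>
    intro k
    show loopMul (iterLoop d (fun i => k i.castSucc)) (phiF (k (Fin.last d))) = msum (d+1) k
    rw [ih, show phiF (k (Fin.last d)) = msum 1 (fun _ => k (Fin.last d)) by unfold phiF; rw [msum_one],
      loopMul_msum_msum]
    have happ : Fin.append (fun i : Fin d => k i.castSucc) (fun _ : Fin 1 => k (Fin.last d)) = k := by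
      funext x
      induction x using Fin.addCases with
      | left i =>
        rw [Fin.append_left]
        congr 1
      | right j =>
        rw [Fin.append_right]
        congr 1
        rw [Subsingleton.elim j 0]
        exact Fin.ext (by simp)
    rw [happ]

lemma prodX_pow_mul_msum {q : ℕ} (n : ℕ) (m : Fin q → ℕ) :
    (∏ j : Fin q, (X j : MvPolynomial (Fin q) ℚ)) ^ n * msum q m =
      msum q (fun j => m j + n) := by
  unfold msum
  rw [Finset.mul_sum]
  refine Finset.sum_congr rfl fun σ _ => ?_
  rw [← Finset.prod_pow, ← Finset.prod_mul_distrib]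
  refine Finset.prod_congr rfl fun j _ => ?_
  rw [← pow_add]
  congr 1
  exact Nat.add_comm _ _

section Bilin

variable {d e : ℕ}

lemma loopMul_zero_left (g : MvPolynomial (Fin e) ℚ) :
    loopMul (0 : MvPolynomial (Fin d) ℚ) g = 0 := by
  unfold loopMul; simp

lemma loopMul_zero_right (f : MvPolynomial (Fin d) ℚ) :
    loopMul f (0 : MvPolynomial (Fin e) ℚ) = 0 := by
  unfold loopMul; simp

lemma loopMul_add_left (f₁ f₂ : MvPolynomial (Fin d) ℚ) (g : MvPolynomial (Fin e) ℚ) :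
    loopMul (f₁ + f₂) g = loopMul f₁ g + loopMul f₂ g := by
  unfold loopMul
  rw [← Finset.sum_add_distrib]
  exact Finset.sum_congr rfl fun σ _ => by rw [map_add, add_mul]

lemma loopMul_add_right (f : MvPolynomial (Fin d) ℚ) (g₁ g₂ : MvPolynomial (Fin e) ℚ) :
    loopMul f (g₁ + g₂) = loopMul f g₁ + loopMul f g₂ := by
  unfold loopMul
  rw [← Finset.sum_add_distrib]
  exact Finset.sum_congr rfl fun σ _ => by rw [map_add, mul_add]

lemma loopMul_smul_left (a : ℚ) (f : MvPolynomial (Fin d) ℚ) (g : MvPolynomial (Fin e) ℚ) :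
    loopMul (a • f) g = a • loopMul f g := by
  unfold loopMul
  rw [Finset.smul_sum]
  exact Finset.sum_congr rfl fun σ _ => by rw [map_smul, smul_mul_assoc]

lemma loopMul_smul_right (a : ℚ) (f : MvPolynomial (Fin d) ℚ) (g : MvPolynomial (Fin e) ℚ) :
    loopMul f (a • g) = a • loopMul f g := by
  unfold loopMul
  rw [Finset.smul_sum]
  exact Finset.sum_congr rfl fun σ _ => by rw [map_smul, mul_smul_comm]

lemma loopMul_mem {S : Set (MvPolynomial (Fin d) ℚ)} {T : Set (MvPolynomial (Fin e) ℚ)}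
    {U : Submodule ℚ (MvPolynomial (Fin (d + e)) ℚ)}
    (h : ∀ s ∈ S, ∀ t ∈ T, loopMul s t ∈ U) {f g}
    (hf : f ∈ Submodule.span ℚ S) (hg : g ∈ Submodule.span ℚ T) : loopMul f g ∈ U := by
  induction hf using Submodule.span_induction with
  | mem s hs =>
    induction hg using Submodule.span_induction with
    | mem t ht => exact h s hs t ht
    | zero => rw [loopMul_zero_right]; exact U.zero_mem
    | add x y _ _ hx hy => rw [loopMul_add_right]; exact U.add_mem hx hy
    | smul a x _ hx => rw [loopMul_smul_right]; exact U.smul_mem a hx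
  | zero => rw [loopMul_zero_left]; exact U.zero_mem
  | add x y _ _ hx hy => rw [loopMul_add_left]; exact U.add_mem hx hy
  | smul a x _ hx => rw [loopMul_smul_left]; exact U.smul_mem a hx

end Bilin

section Sorting

lemma exists_antitone_comp {d : ℕ} (a : Fin d → ℕ) :
    ∃ (b : Fin d → ℕ) (ρ : Equiv.Perm (Fin d)), Antitone b ∧ ∀ x, b (ρ x) = a x := by
  refine ⟨fun x => a (Tuple.sort a (Fin.rev x)),
    (Tuple.sort a).symm.trans (Fin.revPerm), ?_, ?_⟩
  · intro x y hxy
    exact Tuple.monotone_sort a (Fin.rev_le_rev.mpr hxy)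
  · intro x
    simp [Equiv.trans_apply, Fin.rev_rev]

lemma antitone_unique {d : ℕ} {k k' : Fin d → ℕ} (hk : Antitone k) (hk' : Antitone k')
    (σ : Equiv.Perm (Fin d)) (h : ∀ i, k (σ i) = k' i) : k = k' := by
  have h1 : Monotone (k ∘ ⇑(Fin.revPerm : Equiv.Perm (Fin d))) := by
    intro x y hxy
    exact hk (Fin.rev_le_rev.mpr hxy)
  have h2 : Monotone (k ∘ ⇑((Fin.revPerm : Equiv.Perm (Fin d)).trans σ)) := by
    intro x y hxy
    show k (σ (Fin.rev x)) ≤ k (σ (Fin.rev y))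
    rw [h (Fin.rev x), h (Fin.rev y)]
    exact hk' (Fin.rev_le_rev.mpr hxy)
  have := Tuple.unique_monotone h1 h2
  funext i
  have h3 := congrFun this (Fin.rev i)
  simp only [Function.comp_apply, Fin.revPerm_apply, Equiv.trans_apply, Fin.rev_rev] at h3
  rw [h3, h i]

end Sorting

section Coeffs

variable {d : ℕ}

lemma coeff_comp_perm {f : MvPolynomial (Fin d) ℚ} (hf : f.IsSymmetric)
    (a : Fin d → ℕ) (σ : Equiv.Perm (Fin d)) :
    coeff (fs (fun i => a (σ i))) f = coeff (fs a) f := by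
  have h := coeff_rename_mapDomain (⇑σ) σ.injective f (fs (fun i => a (σ i)))
  rw [hf σ] at h
  rw [← h]
  congr 1
  rw [← Finsupp.equivMapDomain_eq_mapDomain]
  ext j
  simp [Finsupp.equivMapDomain_apply]

lemma exists_perm_of_coeff_ne_zero {k : Fin d → ℕ} {e : Fin d →₀ ℕ}
    (h : coeff e (msum d k) ≠ 0) : ∃ σ : Equiv.Perm (Fin d), fs (fun i => k (σ i)) = e := by
  rw [coeff_msum] at h
  have h2 : (Finset.univ.filter
      (fun σ : Equiv.Perm (Fin d) => fs (fun i => k (σ i)) = e)).Nonempty := by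
    rw [Finset.nonempty_iff_ne_empty]
    intro hc
    rw [hc] at h
    simp at h
  obtain ⟨σ, hσ⟩ := h2
  exact ⟨σ, (Finset.mem_filter.mp hσ).2⟩

lemma coeff_msum_self_ne_zero (k : Fin d → ℕ) : coeff (fs k) (msum d k) ≠ 0 := by
  rw [coeff_msum]
  have hmem : (1 : Equiv.Perm (Fin d)) ∈ Finset.univ.filter
      (fun σ : Equiv.Perm (Fin d) => fs (fun i => k (σ i)) = fs k) := by
    refine Finset.mem_filter.mpr ⟨Finset.mem_univ _, ?_⟩
    congr 1
  exact Nat.cast_ne_zero.mpr (Finset.card_ne_zero_of_mem hmem)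

lemma fs_coe (e : Fin d →₀ ℕ) : fs (⇑e) = e := Finsupp.equivFunOnFinite.symm_apply_apply e

/-- every symmetric polynomial lies in the span of the `msum`s -/
lemma symmetric_mem_span_msum (f : MvPolynomial (Fin d) ℚ) (hf : f.IsSymmetric) :
    f ∈ Submodule.span ℚ {z : MvPolynomial (Fin d) ℚ | ∃ k : Fin d → ℕ,
      Antitone k ∧ msum d k = z} := by
  suffices H : ∀ (N : ℕ) (f : MvPolynomial (Fin d) ℚ), f.IsSymmetric → f.support.card ≤ N →
      f ∈ Submodule.span ℚ {z : MvPolynomial (Fin d) ℚ | ∃ k : Fin d → ℕ,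
        Antitone k ∧ msum d k = z} from H f.support.card f hf le_rfl
  intro N
  induction N with
  | zero =>
    intro f _ hcard
    have : f = 0 := by
      rw [← MvPolynomial.support_eq_empty]
      exact Finset.card_eq_zero.mp (Nat.le_zero.mp hcard)
    rw [this]
    exact Submodule.zero_mem _
  | succ N ih =>
    intro f hf hcard
    by_cases hf0 : f = 0
    · rw [hf0]; exact Submodule.zero_mem _
    obtain ⟨e, he⟩ : f.support.Nonempty := by
      rw [Finset.nonempty_iff_ne_empty]
      intro hc
      exact hf0 (MvPolynomial.support_eq_empty.mp hc)
    obtain ⟨b, ρ, hb, hbρ⟩ := exists_antitone_comp (⇑e)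
    set c0 : ℚ := coeff (fs b) f with hc0
    have hc0e : c0 = coeff e f := by
      have := coeff_comp_perm hf b ρ
      rw [show fs (fun i => b (ρ i)) = e by rw [show (fun i => b (ρ i)) = ⇑e from funext hbρ, fs_coe]]
        at this
      rw [hc0, ← this]
    have hc0ne : c0 ≠ 0 := by
      rw [hc0e]
      exact MvPolynomial.mem_support_iff.mp he
    set st : ℚ := coeff (fs b) (msum d b) with hst
    have hstne : st ≠ 0 := coeff_msum_self_ne_zero b
    set g : MvPolynomial (Fin d) ℚ := f - (c0 / st) • msum d b with hg
    have hgsym : g.IsSymmetric := by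
      intro π
      rw [hg, map_sub, map_smul, hf π, msum_symmetric b π]
    have hsupg : g.support ⊆ f.support := by
      intro u hu
      by_contra hu2
      have hcu : coeff u f = 0 := MvPolynomial.notMem_support_iff.mp hu2
      have hmu : coeff u (msum d b) ≠ 0 := by
        intro hmu0
        apply MvPolynomial.mem_support_iff.mp hu
        rw [hg, MvPolynomial.coeff_sub, MvPolynomial.coeff_smul, hcu, hmu0]
        simp
      obtain ⟨σ, hσ⟩ := exists_perm_of_coeff_ne_zero hmu
      have : coeff u f = c0 := by
        rw [← hσ, coeff_comp_perm hf b σ, hc0]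
      rw [hcu] at this
      exact hc0ne this.symm
    have hbmemf : fs b ∈ f.support := by
      rw [MvPolynomial.mem_support_iff]
      exact hc0ne
    have hbnmemg : fs b ∉ g.support := by
      rw [MvPolynomial.notMem_support_iff, hg, MvPolynomial.coeff_sub, MvPolynomial.coeff_smul,
        ← hc0, ← hst, smul_eq_mul, div_mul_cancel₀ c0 hstne]
      ring
    have hssub : g.support ⊂ f.support := ⟨hsupg, fun hsub => hbnmemg (hsub hbmemf)⟩
    have hcardg : g.support.card ≤ N :=
      Nat.lt_succ_iff.mp (lt_of_lt_of_le (Finset.card_lt_card hssub) hcard)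
    have hgmem := ih g hgsym hcardg
    have : f = g + (c0 / st) • msum d b := by rw [hg]; ring
    rw [this]
    exact Submodule.add_mem _ hgmem
      (Submodule.smul_mem _ _ (Submodule.subset_span ⟨b, hb, rfl⟩))

lemma msum_linearIndependent :
    LinearIndependent ℚ (fun k : {k : Fin d → ℕ // Antitone k} => msum d k.1) := by
  rw [linearIndependent_iff']
  intro s g hsum i₀ hi₀
  have h := congrArg (coeff (fs i₀.1)) hsum
  rw [MvPolynomial.coeff_sum] at h
  simp only [MvPolynomial.coeff_smul, smul_eq_mul, MvPolynomial.coeff_zero] at h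
  rw [Finset.sum_eq_single i₀ ?_ (fun hni => absurd hi₀ hni)] at h
  · have := coeff_msum_self_ne_zero i₀.1
    rcases mul_eq_zero.mp h with h1 | h2
    · exact h1
    · exact absurd h2 this
  · intro i _ hne
    have hz : coeff (fs i₀.1) (msum d i.1) = 0 := by
      by_contra hz
      obtain ⟨σ, hσ⟩ := exists_perm_of_coeff_ne_zero hz
      have := antitone_unique i.2 i₀.2 σ (fun j => by
        have := congrFun (congrArg (⇑) hσ) j
        simpa using this)
      exact hne (Subtype.ext this)
    rw [hz, mul_zero]

end Coeffs



lemma fin1_symmetric (φ : MvPolynomial (Fin 1) ℚ) : φ.IsSymmetric := by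
  intro e
  rw [Subsingleton.elim e (Equiv.refl _)]
  simp

/-- high part set -/
def highSet (n d : ℕ) : Set (MvPolynomial (Fin d) ℚ) :=
  {z | ∃ k : Fin d → ℕ, Antitone k ∧ (∃ i, n ≤ k i) ∧ msum d k = z}

lemma msum_append_mem_span_high {n p q : ℕ} (hq : 0 < q) (k : Fin p → ℕ) (m : Fin q → ℕ)
    (hm : ∀ j, n ≤ m j) :
    msum (p + q) (Fin.append k m) ∈ Submodule.span ℚ (highSet n (p + q)) := by
  obtain ⟨b, ρ, hb, hbρ⟩ := exists_antitone_comp (Fin.append k m)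
  have h1 : msum (p + q) (Fin.append k m) = msum (p + q) b := by
    rw [show Fin.append k m = fun x => b (ρ x) from funext (fun x => (hbρ x).symm),
      msum_comp_perm]
  rw [h1]
  refine Submodule.subset_span ⟨b, hb, ⟨ρ (Fin.natAdd p ⟨0, hq⟩), ?_⟩, rfl⟩
  rw [hbρ (Fin.natAdd p ⟨0, hq⟩), Fin.append_right]
  exact hm _

lemma prodX_mul_symm_mem {q : ℕ} (n : ℕ) (g : MvPolynomial (Fin q) ℚ) (hg : g.IsSymmetric) :
    (∏ j : Fin q, (X j : MvPolynomial (Fin q) ℚ)) ^ n * g ∈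
      Submodule.span ℚ {z : MvPolynomial (Fin q) ℚ | ∃ m : Fin q → ℕ,
        Antitone m ∧ (∀ j, n ≤ m j) ∧ msum q m = z} := by
  have hgspan := symmetric_mem_span_msum g hg
  clear hg
  induction hgspan using Submodule.span_induction with
  | mem t ht =>
    obtain ⟨m, hm, rfl⟩ := ht
    rw [prodX_pow_mul_msum]
    exact Submodule.subset_span ⟨fun j => m j + n,
      fun x y hxy => Nat.add_le_add_right (hm hxy) n, fun j => Nat.le_add_left n (m j), rfl⟩
  | zero => rw [mul_zero]; exact Submodule.zero_mem _
  | add x y _ _ hx hy => rw [mul_add]; exact Submodule.add_mem _ hx hy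
  | smul a x _ hx => rw [mul_smul_comm]; exact Submodule.smul_mem _ a hx

lemma ideal_eq_span_high (n d : ℕ) :
    loopFramingIdeal n d = Submodule.span ℚ (highSet n d) := by
  apply le_antisymm
  · rw [loopFramingIdeal, Submodule.span_le]
    rintro z ⟨p, q, h, f, g, hq, hf, hg, hz⟩
    subst h
    have hcast : cast (congrArg (fun m => MvPolynomial (Fin m) ℚ) (rfl : p + q = p + q))
        (loopMul f ((∏ j : Fin q, X j) ^ n * g)) = loopMul f ((∏ j : Fin q, X j) ^ n * g) := rfl
    rw [hcast] at hz
    rw [← hz]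
    -- f in span of msums
    have hfs := symmetric_mem_span_msum f hf
    have hgs := prodX_mul_symm_mem n g hg
    refine loopMul_mem ?_ hfs hgs
    rintro s ⟨k, _, rfl⟩ t ⟨m, _, hm, rfl⟩
    rw [loopMul_msum_msum]
    exact msum_append_mem_span_high hq k m hm
  · rw [Submodule.span_le]
    rintro z ⟨k, hk, ⟨i₀, hi₀⟩, rfl⟩
    match d, k, hk, i₀, hi₀ with
    | p + 1, k, hk, i₀, hi₀ =>
    apply Submodule.subset_span
    refine ⟨p, 1, rfl, msum p (fun i => k i.succ), X 0 ^ (k 0 - n), Nat.one_pos,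
      msum_symmetric _, fin1_symmetric _, ?_⟩
    have hk0 : n ≤ k 0 := le_trans hi₀ (hk (Fin.zero_le i₀))
    have h1 : ((∏ j : Fin 1, (X j : MvPolynomial (Fin 1) ℚ)) ^ n * X 0 ^ (k 0 - n)) =
        msum 1 (fun _ => k 0) := by
      rw [Fin.prod_univ_one, ← pow_add, msum_one]
      congr 1
      omega
    rw [h1, show (cast (congrArg (fun m => MvPolynomial (Fin m) ℚ) (rfl : p + 1 = p + 1))
        (loopMul (msum p (fun i => k i.succ)) (msum 1 (fun _ => k 0)))) =
        loopMul (msum p (fun i => k i.succ)) (msum 1 (fun _ => k 0)) from rfl,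
      loopMul_msum_msum]
    have happ : Fin.append (fun i : Fin p => k i.succ) (fun _ : Fin 1 => k 0) =
        fun x => k (finRotate (p + 1) x) := by
      funext x
      induction x using Fin.addCases with
      | left i =>
        rw [Fin.append_left, finRotate_succ_apply]
        congr 1
        exact Fin.coeSucc_eq_succ.symm
      | right j =>
        rw [Fin.append_right, Subsingleton.elim j 0,
          show (Fin.natAdd p (0 : Fin 1)) = Fin.last p from Fin.ext (by simp), finRotate_last]
    rw [happ, msum_comp_perm]

def lowSet (n d : ℕ) : Set (MvPolynomial (Fin d) ℚ) :=
  {z | ∃ k : Fin d → ℕ, Antitone k ∧ (∀ i, k i < n) ∧ msum d k = z}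


/-- the CoHa-module of the one-loop quiver with framing `n`,
i.e. the quotient of `ℚ[φ_0, φ_1, …]` by the ideal
`Σ_{p≥0,q≥1} H_p * (e_q^n ∪ H_q)`, is the polynomial ring
`ℚ[φ_0, …, φ_{n−1}]`; equivalently the ideal is generated by
`φ_n, φ_{n+1}, φ_{n+2}, …`.  In each degree `d`: the kernel ideal is spanned by
the monomials `φ_{k_1} * ⋯ * φ_{k_d}` (`k_1 ≥ ⋯ ≥ k_d`) with some index
`≥ n`, and the monomials with all indices `< n` span a complement inside
`ℚ[x_1,…,x_d]^{S_d}`. -/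
theorem coha_loop_framed_module (n : ℕ) :
    ∀ d : ℕ,
      loopFramingIdeal n d =
        Submodule.span ℚ {z : MvPolynomial (Fin d) ℚ | ∃ k : Fin d → ℕ,
          Antitone k ∧ (∃ i, n ≤ k i) ∧ iterLoop d k = z} ∧
      (symmetricSubalgebra (Fin d) ℚ).toSubmodule = loopFramingIdeal n d ⊔
        Submodule.span ℚ {z : MvPolynomial (Fin d) ℚ | ∃ k : Fin d → ℕ,
          Antitone k ∧ (∀ i, k i < n) ∧ iterLoop d k = z} ∧
      Disjoint (loopFramingIdeal n d)
        (Submodule.span ℚ {z : MvPolynomial (Fin d) ℚ | ∃ k : Fin d → ℕ,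
          Antitone k ∧ (∀ i, k i < n) ∧ iterLoop d k = z}) := by
  intro d
  have hsethigh : {z : MvPolynomial (Fin d) ℚ | ∃ k : Fin d → ℕ,
      Antitone k ∧ (∃ i, n ≤ k i) ∧ iterLoop d k = z} = highSet n d := by
    ext z
    simp only [Set.mem_setOf_eq, highSet, iterLoop_eq_msum]
  have hsetlow : {z : MvPolynomial (Fin d) ℚ | ∃ k : Fin d → ℕ,
      Antitone k ∧ (∀ i, k i < n) ∧ iterLoop d k = z} = lowSet n d := by
    ext z
    simp only [Set.mem_setOf_eq, lowSet, iterLoop_eq_msum]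
  rw [hsethigh, hsetlow]
  refine ⟨ideal_eq_span_high n d, ?_, ?_⟩
  · -- decomposition
    apply le_antisymm
    · intro x hx
      have hxs : x.IsSymmetric := (mem_symmetricSubalgebra x).mp hx
      have := symmetric_mem_span_msum x hxs
      refine Submodule.span_le.mpr ?_ this
      rintro z ⟨k, hk, rfl⟩
      by_cases hcase : ∃ i, n ≤ k i
      · apply Submodule.mem_sup_left
        rw [ideal_eq_span_high]
        exact Submodule.subset_span ⟨k, hk, hcase, rfl⟩
      · apply Submodule.mem_sup_right
        push_neg at hcase
        exact Submodule.subset_span ⟨k, hk, hcase, rfl⟩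
    · apply sup_le
      · rw [ideal_eq_span_high, Submodule.span_le]
        rintro z ⟨k, _, _, rfl⟩
        exact (mem_symmetricSubalgebra _).mpr (msum_symmetric k)
      · rw [Submodule.span_le]
        rintro z ⟨k, _, _, rfl⟩
        exact (mem_symmetricSubalgebra _).mpr (msum_symmetric k)
  · -- disjointness
    rw [ideal_eq_span_high]
    have h1 : highSet n d = (fun k : {k : Fin d → ℕ // Antitone k} => msum d k.1) ''
        {x : {k : Fin d → ℕ // Antitone k} | ∃ i, n ≤ x.1 i} := by
      ext z
      constructor
      · rintro ⟨k, hk, h2, rfl⟩; exact ⟨⟨k, hk⟩, h2, rfl⟩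
      · rintro ⟨⟨k, hk⟩, h2, rfl⟩; exact ⟨k, hk, h2, rfl⟩
    have h2 : lowSet n d = (fun k : {k : Fin d → ℕ // Antitone k} => msum d k.1) ''
        {x : {k : Fin d → ℕ // Antitone k} | ∀ i, x.1 i < n} := by
      ext z
      constructor
      · rintro ⟨k, hk, h2, rfl⟩; exact ⟨⟨k, hk⟩, h2, rfl⟩
      · rintro ⟨⟨k, hk⟩, h2, rfl⟩; exact ⟨k, hk, h2, rfl⟩
    rw [h1, h2]
    refine msum_linearIndependent.disjoint_span_image ?_
    rw [Set.disjoint_left]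
    rintro x ⟨i, hi⟩ hx2
    exact absurd hi (not_le.mpr (hx2 i))
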